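/- Lemma 2.4(ii): Let x₁, x₂, y₁, y₂ ∈ H satisfy Q xᵢ − B xᵢ − Q yᵢ ∈ A yᵢ for i = 1, 2 (i.e. yᵢ = T xᵢ), and set rᵢ := xᵢ − yᵢ. Then 4ν · ⟪Q (x₁ − x₂), y₁ − y₂⟫ ≥ 4ν · ⟪Q (y₁ − y₂), y₁ − y₂⟫ − β · ⟪Q (r₁ − r₂), r₁ − r₂⟫; i.e. ⟪Q(x₁−x₂), T x₁ − T x₂⟫ ≥ ‖T x₁ − T x₂‖_Q² − (β/(4ν)) ‖(I−T)x₁ − (I−T)x₂‖_Q². -/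

import Mathlib

open RealInnerProductSpace

/-- Lemma 2.4(ii) for the G-FBS operator `T = (A+Q)⁻¹(Q−B)`:
`⟪Q(x₁−x₂), Tx₁−Tx₂⟫ ≥ ‖Tx₁−Tx₂‖_Q² − (β/(4ν))‖(I−T)x₁−(I−T)x₂‖_Q²`. -/
theorem stmt_3
    {H : Type*} [NormedAddCommGroup H] [InnerProductSpace ℝ H] [CompleteSpace H]
    (Q : H →L[ℝ] H)
    (hQsym : ∀ x y : H, ⟪Q x, y⟫ = ⟪x, Q y⟫)
    (hQpos : ∀ x : H, 0 ≤ ⟪Q x, x⟫)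
    (ν : ℝ) (hν : 0 < ν)
    (hνQ : ∀ w ∈ (LinearMap.ker (Q : H →ₗ[ℝ] H))ᗮ, ν * ‖w‖ ≤ ‖Q w‖)
    (β : ℝ) (hβ : 0 ≤ β)
    (B : H → H)
    (hB : ∀ x y : H, ‖B x - B y‖ ^ 2 ≤ β * ⟪B x - B y, x - y⟫)
    (hranB : Set.range B ⊆ Set.range Q)
    (A : H → Set H)
    (hA : ∀ x y u v : H, u ∈ A x → v ∈ A y → 0 ≤ ⟪u - v, x - y⟫)
    (x₁ x₂ y₁ y₂ : H)
    (hy₁ : Q x₁ - B x₁ - Q y₁ ∈ A y₁)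
    (hy₂ : Q x₂ - B x₂ - Q y₂ ∈ A y₂)
    (r₁ r₂ : H) (hr₁ : r₁ = x₁ - y₁) (hr₂ : r₂ = x₂ - y₂) :
    4 * ν * ⟪Q (y₁ - y₂), y₁ - y₂⟫ - β * ⟪Q (r₁ - r₂), r₁ - r₂⟫ ≤
      4 * ν * ⟪Q (x₁ - x₂), y₁ - y₂⟫ := by
  subst hr₁ hr₂
  set Δr : H := (x₁ - y₁) - (x₂ - y₂) with hΔr
  -- monotonicity of A
  have hmono : 0 ≤ ⟪(Q x₁ - B x₁ - Q y₁) - (Q x₂ - B x₂ - Q y₂), y₁ - y₂⟫ :=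
    hA y₁ y₂ _ _ hy₁ hy₂
  have hmono' : 0 ≤ ⟪Q (x₁ - x₂), y₁ - y₂⟫ - ⟪B x₁ - B x₂, y₁ - y₂⟫
      - ⟪Q (y₁ - y₂), y₁ - y₂⟫ := by
    have : ⟪(Q x₁ - B x₁ - Q y₁) - (Q x₂ - B x₂ - Q y₂), y₁ - y₂⟫
        = ⟪Q (x₁ - x₂), y₁ - y₂⟫ - ⟪B x₁ - B x₂, y₁ - y₂⟫
          - ⟪Q (y₁ - y₂), y₁ - y₂⟫ := by
      simp [map_sub, inner_sub_left]
      ring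
    linarith [this ▸ hmono]
  -- key claim
  have key : 0 ≤ β * ⟪Q Δr, Δr⟫ + 4 * ν * ⟪B x₁ - B x₂, y₁ - y₂⟫ := by
    rcases eq_or_lt_of_le hβ with hβ0 | hβ0
    · -- β = 0 : B x₁ = B x₂
      have hB0 : ‖B x₁ - B x₂‖ ^ 2 ≤ 0 := by
        have := hB x₁ x₂; rw [← hβ0] at this; simpa using this
      have : B x₁ - B x₂ = 0 := by
        have := sq_nonneg ‖B x₁ - B x₂‖
        have hn : ‖B x₁ - B x₂‖ = 0 := by nlinarith
        simpa [norm_eq_zero] using hn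
      rw [this]
      simp [← hβ0]
    · -- β > 0
      -- cocoercivity
      have hco : ‖B x₁ - B x₂‖ ^ 2 ≤ β * ⟪B x₁ - B x₂, x₁ - x₂⟫ := hB x₁ x₂
      have hsplit : ⟪B x₁ - B x₂, x₁ - x₂⟫
          = ⟪B x₁ - B x₂, y₁ - y₂⟫ + ⟪B x₁ - B x₂, Δr⟫ := by
        rw [← inner_add_right]
        congr 1
        rw [hΔr]
        abel
      -- express B x₁ - B x₂ = Q w' with w' ∈ (ker Q)ᗮ
      obtain ⟨w₁, hw₁⟩ := hranB (Set.mem_range_self x₁)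
      obtain ⟨w₂, hw₂⟩ := hranB (Set.mem_range_self x₂)
      haveI : CompleteSpace (LinearMap.ker (Q : H →ₗ[ℝ] H)) :=
        (ContinuousLinearMap.isClosed_ker Q).completeSpace_coe
      set w : H := w₁ - w₂ with hw
      set w' : H := w - (Submodule.orthogonalProjectionOnto (LinearMap.ker (Q : H →ₗ[ℝ] H)) w : H) with hw'
      have hw'mem : w' ∈ (LinearMap.ker (Q : H →ₗ[ℝ] H))ᗮ :=
        Submodule.sub_starProjection_mem_orthogonal (K := LinearMap.ker (Q : H →ₗ[ℝ] H)) w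
      have hQw' : Q w' = B x₁ - B x₂ := by
        have hk : Q ((Submodule.orthogonalProjectionOnto (LinearMap.ker (Q : H →ₗ[ℝ] H)) w : H)) = 0 :=
          (Submodule.orthogonalProjectionOnto (LinearMap.ker (Q : H →ₗ[ℝ] H)) w).2
        rw [hw', map_sub, hk, sub_zero, hw, map_sub, hw₁, hw₂]
      have hnorm : ν * ‖w'‖ ≤ ‖B x₁ - B x₂‖ := by
        have := hνQ w' hw'mem
        rwa [hQw'] at this
      have hcs : ⟪Q w', w'⟫ ≤ ‖B x₁ - B x₂‖ * ‖w'‖ := by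
        calc ⟪Q w', w'⟫ ≤ ‖Q w'‖ * ‖w'‖ := real_inner_le_norm _ _
          _ = ‖B x₁ - B x₂‖ * ‖w'‖ := by rw [hQw']
      -- square expansion: 0 ≤ ⟪Q((2ν/β)w' - Δr), (2ν/β)w' - Δr⟫
      have hsq : 0 ≤ (2 * ν / β) ^ 2 * ⟪Q w', w'⟫
          - 2 * (2 * ν / β) * ⟪Q w', Δr⟫ + ⟪Q Δr, Δr⟫ := by
        have h := hQpos ((2 * ν / β) • w' - Δr)
        have hexp : ⟪Q ((2 * ν / β) • w' - Δr), (2 * ν / β) • w' - Δr⟫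
            = (2 * ν / β) ^ 2 * ⟪Q w', w'⟫
              - 2 * (2 * ν / β) * ⟪Q w', Δr⟫ + ⟪Q Δr, Δr⟫ := by
          have hsym : ⟪Q Δr, w'⟫ = ⟪Q w', Δr⟫ := by
            rw [hQsym, real_inner_comm]
          simp [map_sub, map_smul, inner_sub_left, inner_sub_right,
            inner_smul_left, inner_smul_right, hsym]
          ring
        linarith [hexp ▸ h]
      have hQwΔr : ⟪Q w', Δr⟫ = ⟪B x₁ - B x₂, Δr⟫ := by rw [hQw']
      rw [hQwΔr] at hsq
      -- combine
      have hβ2 : (0:ℝ) < β ^ 2 := by positivity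
      have hβne : β ≠ 0 := ne_of_gt hβ0
      have h1 : 4 * ν * β * ⟪B x₁ - B x₂, Δr⟫
          ≤ 4 * ν ^ 2 * ⟪Q w', w'⟫ + β ^ 2 * ⟪Q Δr, Δr⟫ := by
        have hmul : 0 ≤ β ^ 2 * ((2 * ν / β) ^ 2 * ⟪Q w', w'⟫
            - 2 * (2 * ν / β) * ⟪B x₁ - B x₂, Δr⟫ + ⟪Q Δr, Δr⟫) :=
          mul_nonneg (le_of_lt hβ2) hsq
        have heq : β ^ 2 * ((2 * ν / β) ^ 2 * ⟪Q w', w'⟫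
            - 2 * (2 * ν / β) * ⟪B x₁ - B x₂, Δr⟫ + ⟪Q Δr, Δr⟫)
            = 4 * ν ^ 2 * ⟪Q w', w'⟫ - 4 * ν * β * ⟪B x₁ - B x₂, Δr⟫
              + β ^ 2 * ⟪Q Δr, Δr⟫ := by
          field_simp
          ring
        linarith [heq ▸ hmul]
      have h2 : ν * ⟪Q w', w'⟫ ≤ ‖B x₁ - B x₂‖ ^ 2 := by
        nlinarith [mul_le_mul_of_nonneg_left hcs (le_of_lt hν),
          mul_le_mul_of_nonneg_left hnorm (norm_nonneg (B x₁ - B x₂)),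
          norm_nonneg (B x₁ - B x₂), norm_nonneg w']
      rw [hsplit] at hco
      have hco4 : 4 * ν * ‖B x₁ - B x₂‖ ^ 2
          ≤ 4 * ν * (β * (⟪B x₁ - B x₂, y₁ - y₂⟫ + ⟪B x₁ - B x₂, Δr⟫)) :=
        mul_le_mul_of_nonneg_left hco (by positivity)
      have h3 : 0 ≤ β * (β * ⟪Q Δr, Δr⟫ + 4 * ν * ⟪B x₁ - B x₂, y₁ - y₂⟫) := by
        nlinarith [hco4, h1, mul_le_mul_of_nonneg_left h2
          (by positivity : (0:ℝ) ≤ 4 * ν)]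
      have := le_of_mul_le_mul_left
        (by linarith : β * 0 ≤ β * (β * ⟪Q Δr, Δr⟫ + 4 * ν * ⟪B x₁ - B x₂, y₁ - y₂⟫)) hβ0
      linarith
  have h4 : 0 ≤ 4 * ν * (⟪Q (x₁ - x₂), y₁ - y₂⟫ - ⟪B x₁ - B x₂, y₁ - y₂⟫
      - ⟪Q (y₁ - y₂), y₁ - y₂⟫) := mul_nonneg (by positivity) hmono'
  linarith [key, h4]
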